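/- If V is non-decreasing in its destination-age argument Δ (for every fixed A and h), then the Bellman image T V is non-decreasing in Δ (for every fixed A and h). -/

import Mathlib

open Finset

/-- Validity of a device-age vector: ages in `{1,…,Âₙ}` for type-I devices (those in `N1`),
and age `0` for type-II devices. -/
def validAge {N : Type*} (N1 : Finset N) (Ahat : N → ℕ) (A : N → ℕ) : Prop :=
  (∀ n ∈ N1, 1 ≤ A n ∧ A n ≤ Ahat n) ∧ ∀ n ∉ N1, A n = 0

/-- Destination-age update `D(A,Δ,u)`: if `u` is a full schedule (`|u| = M`), the new age is
`min(maxₙ uₙ·Aₙ + 1, Δ̂)`; otherwise it is `min(Δ+1, Δ̂)`. Actions are encoded as the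
finset of scheduled devices. -/
def destUpdate {N : Type*} (M Δhat : ℕ) (A : N → ℕ) (Δ : ℕ) (u : Finset N) : ℕ :=
  if u.card = M then min (u.sup A + 1) Δhat else min (Δ + 1) Δhat

/-- Next device-age vector given that the set `S ⊆ N1` of type-I devices receives
fresh status packets. -/
def nextAge {N : Type*} [DecidableEq N] (N1 : Finset N) (Ahat : N → ℕ)
    (S : Finset N) (A : N → ℕ) : N → ℕ :=
  fun n => if n ∈ N1 then (if n ∈ S then 1 else min (A n + 1) (Ahat n)) else 0

/-- Probability that exactly the devices in `S` receive arrivals. -/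
noncomputable def arrWeight {N : Type*} [DecidableEq N] (N1 : Finset N) (lam : N → ℝ)
    (S : Finset N) : ℝ :=
  (∏ n ∈ S, lam n) * ∏ n ∈ N1 \ S, (1 - lam n)

/-- Probability of the next channel state vector `h` under independent components. -/
noncomputable def chanWeight {N : Type*} [Fintype N] {H : N → Type*}
    (q : ∀ n, H n → ℝ) (h : ∀ n, H n) : ℝ := ∏ n, q n (h n)

/-- One-step energy cost `c(u,h) = Σₙ βₙ uₙ (Cˢₙ + Cᵘₙ(hₙ))`. -/
noncomputable def energyCost {N : Type*} {H : N → Type*} (β Cs : N → ℝ)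
    (Cu : ∀ n, H n → ℝ) (u : Finset N) (h : ∀ n, H n) : ℝ :=
  ∑ n ∈ u, β n * (Cs n + Cu n (h n))

/-- Q-function `J_V(A,Δ,h,u) = Δ + c(u,h) + E[V(A', D(A,Δ,u), h')]`. -/
noncomputable def Qfun {N : Type*} [Fintype N] [DecidableEq N] {H : N → Type*}
    [∀ n, Fintype (H n)] (N1 : Finset N) (M Δhat : ℕ) (Ahat : N → ℕ) (lam : N → ℝ)
    (q : ∀ n, H n → ℝ) (β Cs : N → ℝ) (Cu : ∀ n, H n → ℝ)
    (V : (N → ℕ) → ℕ → (∀ n, H n) → ℝ)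
    (A : N → ℕ) (Δ : ℕ) (h : ∀ n, H n) (u : Finset N) : ℝ :=
  (Δ : ℝ) + energyCost β Cs Cu u h +
    ∑ S ∈ N1.powerset, arrWeight N1 lam S *
      ∑ h' : ∀ n, H n, chanWeight q h' *
        V (nextAge N1 Ahat S A) (destUpdate M Δhat A Δ u) h'

/-- Bellman operator: `(T V)(A,Δ,h) = min over feasible u of J_V(A,Δ,h,u)`. -/
noncomputable def bellman {N : Type*} [Fintype N] [DecidableEq N] {H : N → Type*}
    [∀ n, Fintype (H n)] (N1 : Finset N) (M Δhat : ℕ) (Ahat : N → ℕ) (lam : N → ℝ)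
    (q : ∀ n, H n → ℝ) (β Cs : N → ℝ) (Cu : ∀ n, H n → ℝ)
    (V : (N → ℕ) → ℕ → (∀ n, H n) → ℝ) :
    (N → ℕ) → ℕ → (∀ n, H n) → ℝ :=
  fun A Δ h =>
    (Finset.univ.filter (fun u : Finset N => u.card ≤ M)).inf'
      ⟨∅, by simp⟩ (Qfun N1 M Δhat Ahat lam q β Cs Cu V A Δ h)

/-- `u` is optimal at state `(A,Δ,h)` under `V`. -/
def isOptimal {N : Type*} [Fintype N] [DecidableEq N] {H : N → Type*}
    [∀ n, Fintype (H n)] (N1 : Finset N) (M Δhat : ℕ) (Ahat : N → ℕ) (lam : N → ℝ)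
    (q : ∀ n, H n → ℝ) (β Cs : N → ℝ) (Cu : ∀ n, H n → ℝ)
    (V : (N → ℕ) → ℕ → (∀ n, H n) → ℝ)
    (A : N → ℕ) (Δ : ℕ) (h : ∀ n, H n) (u : Finset N) : Prop :=
  ∀ v : Finset N, v.card ≤ M →
    Qfun N1 M Δhat Ahat lam q β Cs Cu V A Δ h u ≤
    Qfun N1 M Δhat Ahat lam q β Cs Cu V A Δ h v

/-- If `V` is non-decreasing in its destination-age argument `Δ` (for every fixed valid `A`
and `h`), then the Bellman image `T V` is non-decreasing in `Δ` (for every fixed `A`, `h`). -/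
theorem stmt4
    {N : Type*} [Fintype N] [DecidableEq N] {H : N → Type*}
    [∀ n, Fintype (H n)] [∀ n, LinearOrder (H n)]
    (N1 : Finset N) (M Δhat : ℕ) (Ahat : N → ℕ) (lam : N → ℝ)
    (q : ∀ n, H n → ℝ) (β Cs : N → ℝ) (Cu : ∀ n, H n → ℝ)
    (hM1 : 1 ≤ M) (hM2 : M ≤ Fintype.card N) (hΔhat : 1 ≤ Δhat)
    (hAhat : ∀ n ∈ N1, 1 ≤ Ahat n)
    (hlam : ∀ n ∈ N1, 0 ≤ lam n ∧ lam n ≤ 1)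
    (hq0 : ∀ n (x : H n), 0 ≤ q n x) (hq1 : ∀ n, ∑ x : H n, q n x = 1)
    (hCu0 : ∀ n (x : H n), 0 ≤ Cu n x) (hCuA : ∀ n, Antitone (Cu n))
    (hCs0 : ∀ n, 0 ≤ Cs n) (hCsI : ∀ n ∈ N1, Cs n = 0)
    (hβ : ∀ n, 0 < β n)
    (V : (N → ℕ) → ℕ → (∀ n, H n) → ℝ)
    (hV : ∀ (A : N → ℕ) (h : ∀ n, H n) (Δ Δ' : ℕ), validAge N1 Ahat A →
      1 ≤ Δ → Δ ≤ Δ' → Δ' ≤ Δhat → V A Δ h ≤ V A Δ' h)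
    (A : N → ℕ) (hA : validAge N1 Ahat A) (h : ∀ n, H n)
    (Δ Δ' : ℕ) (h1 : 1 ≤ Δ) (h2 : Δ ≤ Δ') (h3 : Δ' ≤ Δhat) :
    bellman N1 M Δhat Ahat lam q β Cs Cu V A Δ h ≤
    bellman N1 M Δhat Ahat lam q β Cs Cu V A Δ' h := by
  unfold bellman
  refine Finset.le_inf' _ _ ?_
  intro u hu
  refine Finset.inf'_le_of_le (f := Qfun N1 M Δhat Ahat lam q β Cs Cu V A Δ h) hu ?_
  unfold Qfun
  have hd1 : 1 ≤ destUpdate M Δhat A Δ u := by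
    unfold destUpdate; split <;> exact le_min (Nat.le_add_left 1 _) hΔhat
  have hdle : destUpdate M Δhat A Δ u ≤ destUpdate M Δhat A Δ' u := by
    unfold destUpdate; split
    · exact le_rfl
    · exact min_le_min (by omega) le_rfl
  have hd2 : destUpdate M Δhat A Δ' u ≤ Δhat := by
    unfold destUpdate; split <;> exact min_le_right _ _
  have hval : ∀ S : Finset N, validAge N1 Ahat (nextAge N1 Ahat S A) := by
    intro S
    constructor
    · intro n hn
      simp only [nextAge, if_pos hn]
      split
      · exact ⟨le_rfl, hAhat n hn⟩
      · exact ⟨le_min (by omega) (hAhat n hn), min_le_right _ _⟩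
    · intro n hn
      simp [nextAge, hn]
  gcongr ?_ + _ + ?_
  · exact_mod_cast h2
  · apply Finset.sum_le_sum
    intro S hS
    rw [Finset.mem_powerset] at hS
    have hw : 0 ≤ arrWeight N1 lam S := by
      unfold arrWeight
      apply mul_nonneg
      · exact Finset.prod_nonneg fun n hn => (hlam n (hS hn)).1
      · exact Finset.prod_nonneg fun n hn => by
          have := hlam n (Finset.mem_sdiff.mp hn).1; linarith [this.2]
    apply mul_le_mul_of_nonneg_left _ hw
    apply Finset.sum_le_sum
    intro h' _
    have hcw : 0 ≤ chanWeight q h' :=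
      Finset.prod_nonneg fun n _ => hq0 n (h' n)
    exact mul_le_mul_of_nonneg_left
      (hV _ h' _ _ (hval S) hd1 hdle hd2) hcw
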